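/- Let p ≥ 1 and 0 ≤ q ≤ p-1 be integers and t an odd integer. Then the energy of a k-uniform hypergraph H is never equal to the p-th root of 2^q · t. -/

import Mathlib

open Matrix BigOperators

set_option linter.unusedSectionVars false

variable {V : Type*} [Fintype V] [DecidableEq V]

/-- Adjacency matrix of a (multi-)hypergraph given by its multiset of edges:
entry `(i,j)` is the number of edges containing both `i` and `j`, with zero diagonal. -/
def adjacencyMatrix (E : Multiset (Finset V)) : Matrix V V ℝ :=
  Matrix.of fun i j => if i = j then 0 else ((E.filter (fun e => i ∈ e ∧ j ∈ e)).card : ℝ)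

lemma adjacency_isHermitian (E : Multiset (Finset V)) : (adjacencyMatrix E).IsHermitian := by
  unfold Matrix.IsHermitian
  ext i j
  by_cases h : i = j
  · subst h; simp [adjacencyMatrix]
  · simp only [adjacencyMatrix, Matrix.conjTranspose_apply, Matrix.of_apply, h, Ne.symm h,
      if_false, star_trivial]
    congr 1
    exact congrArg Multiset.card (Multiset.filter_congr (fun e _ => and_comm))

/-- Energy of a (multi-)hypergraph: sum of the absolute values of the adjacency eigenvalues. -/
noncomputable def energy (E : Multiset (Finset V)) : ℝ :=
  ∑ i, |(adjacency_isHermitian E).eigenvalues i|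

/-- Degree of a vertex: the number of edges containing it. -/
def hdegree (E : Multiset (Finset V)) (v : V) : ℕ := (E.filter (fun e => v ∈ e)).card

/-- Zagreb index: sum of squares of vertex degrees. -/
def zagreb (E : Multiset (Finset V)) : ℕ := ∑ v, (hdegree E v)^2

open Polynomial in
lemma my_eval_charpoly {n R : Type*} [Fintype n] [DecidableEq n] [CommRing R]
    (M : Matrix n n R) (μ : R) :
    M.charpoly.eval μ = (μ • (1 : Matrix n n R) - M).det := by
  rw [Matrix.charpoly, ← Polynomial.coe_evalRingHom, RingHom.map_det]
  congr 1
  ext i j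
  by_cases h : i = j
  · subst h
    simp [charmatrix_apply_eq, Matrix.one_apply]
  · simp [charmatrix_apply_ne _ _ _ h, Matrix.one_apply, h]

open Polynomial in
lemma eig_integral {n : Type*} [Fintype n] [DecidableEq n] (M₀ : Matrix n n ℤ)
    {M : Matrix n n ℝ} (hM : M = M₀.map (Int.cast)) (hH : M.IsHermitian) (i : n) :
    IsIntegral ℤ (hH.eigenvalues i) := by
  subst hM
  refine ⟨M₀.charpoly, M₀.charpoly_monic, ?_⟩
  have key : (M₀.map (Int.cast : ℤ → ℝ)).charpoly.eval (hH.eigenvalues i) = 0 := by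
    rw [my_eval_charpoly]
    have hv := hH.mulVec_eigenvectorBasis i
    have hvne : ⇑(hH.eigenvectorBasis i) ≠ 0 := by
      have := hH.eigenvectorBasis.orthonormal.ne_zero i
      intro h; apply this; ext x; exact congrFun h x
    rw [← Matrix.exists_mulVec_eq_zero_iff]
    refine ⟨_, hvne, ?_⟩
    rw [Matrix.sub_mulVec, Matrix.smul_mulVec, Matrix.one_mulVec, hv, sub_self]
  show Polynomial.eval₂ (algebraMap ℤ ℝ) (hH.eigenvalues i) M₀.charpoly = 0
  rw [eval₂_eq_eval_map]
  have h2 : M₀.charpoly.map (algebraMap ℤ ℝ) = (M₀.map (Int.cast : ℤ → ℝ)).charpoly :=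
    (Matrix.charpoly_map M₀ (Int.castRingHom ℝ)).symm
  rw [h2]
  exact key

lemma eig_sum_trace {n : Type*} [Fintype n] [DecidableEq n] {M : Matrix n n ℝ}
    (hH : M.IsHermitian) : ∑ i, hH.eigenvalues i = M.trace := by
  conv_rhs => rw [hH.spectral_theorem]
  rw [Unitary.conjStarAlgAut_apply, Matrix.trace_mul_cycle]
  rw [Unitary.coe_star_mul_self, one_mul, Matrix.trace_diagonal]
  simp


/-- for integers `p ≥ 1`, `0 ≤ q ≤ p-1` and odd `t`, the energy of a
`k`-uniform hypergraph is never the `p`-th root of `2^q * t`, i.e. the `p`-th power of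
the energy is never `2^q * t`. -/
theorem stmt_9 (k : ℕ) (hk : 2 ≤ k) (E : Finset (Finset V))
    (hunif : ∀ e ∈ E, e.card = k)
    (p q : ℕ) (hp : 1 ≤ p) (hq : q ≤ p - 1) (t : ℤ) (ht : Odd t) :
    energy E.val ^ p ≠ 2 ^ q * (t : ℝ) := by
  intro hEq
  have hH := adjacency_isHermitian E.val
  set A₀ : Matrix V V ℤ := Matrix.of
    (fun i j => if i = j then 0 else (((E.val).filter (fun e => i ∈ e ∧ j ∈ e)).card : ℤ))
    with hA0
  have hmap : adjacencyMatrix E.val = A₀.map (Int.cast) := by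
    ext i j
    by_cases h : i = j <;> simp [adjacencyMatrix, hA0, h]
  have hint : ∀ i, IsIntegral ℤ (hH.eigenvalues i) := fun i => eig_integral A₀ hmap hH i
  have htr : (adjacencyMatrix E.val).trace = 0 := by
    simp [Matrix.trace, Matrix.diag, adjacencyMatrix]
  have hsum : ∑ i, hH.eigenvalues i = 0 := by rw [eig_sum_trace hH, htr]
  set f : V → ℝ := hH.eigenvalues with hf
  set S : ℝ := ∑ i ∈ Finset.univ.filter (fun i => 0 < f i), f i with hS
  have hSint : IsIntegral ℤ S := IsIntegral.sum _ (fun i _ => hint i)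
  have hE2 : energy E.val = 2 * S := by
    have habs : ∀ i : V, |f i| + f i = if 0 < f i then 2 * f i else 0 := by
      intro i; by_cases h : 0 < f i
      · rw [if_pos h, abs_of_pos h]; ring
      · rw [if_neg h, abs_of_nonpos (le_of_not_gt h)]; ring
    calc energy E.val = energy E.val + ∑ i, f i := by rw [hsum, add_zero]
      _ = ∑ i, (|f i| + f i) := by rw [energy, ← Finset.sum_add_distrib]
      _ = ∑ i, (if 0 < f i then 2 * f i else 0) := Finset.sum_congr rfl (fun i _ => habs i)
      _ = ∑ i ∈ Finset.univ.filter (fun i => 0 < f i), 2 * f i := (Finset.sum_filter _ _).symm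
      _ = 2 * S := by rw [hS, Finset.mul_sum]
  have key : (2:ℝ)^p * S^p = 2^q * t := by
    rw [← mul_pow, ← hE2]; exact hEq
  have hpq1 : q + 1 ≤ p := by omega
  have h2q : (2:ℝ)^(p-q) * S^p = t := by
    have h2 : (2:ℝ)^p = 2^q * 2^(p-q) := by rw [← pow_add]; congr 1; omega
    rw [h2] at key
    have h2qne : (2:ℝ)^q ≠ 0 := by positivity
    apply mul_left_cancel₀ h2qne
    rw [← key]; ring
  have h2pq_ne : ((2:ℝ)^(p-q)) ≠ 0 := by positivity
  have hr : (((t : ℚ) / 2^(p-q) : ℚ) : ℝ) = S^p := by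
    push_cast
    rw [div_eq_iff h2pq_ne]
    linarith [h2q]
  have hSpInt : IsIntegral ℤ (S^p) := hSint.pow p
  have hrInt : IsIntegral ℤ (((t : ℚ) / 2^(p-q) : ℚ)) := by
    rw [← hr] at hSpInt
    exact (isIntegral_algHom_iff ((algebraMap ℚ ℝ).toIntAlgHom)
      (by exact Rat.cast_injective)).mp hSpInt
  obtain ⟨z, hz⟩ := IsIntegrallyClosed.isIntegral_iff.mp hrInt
  have h2pq_ne' : ((2:ℚ)^(p-q)) ≠ 0 := by positivity
  rw [eq_div_iff h2pq_ne'] at hz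
  have ht' : t = z * 2^(p-q) := by
    have : (t : ℚ) = (z : ℚ) * 2^(p-q) := by
      simpa using hz.symm
    exact_mod_cast this
  have hd : (2:ℤ) ∣ t := by
    rw [ht']
    have hrw : p - q = (p - q - 1) + 1 := by omega
    rw [hrw, pow_succ]
    exact ⟨z * 2^(p-q-1), by ring⟩
  obtain ⟨c, hc⟩ := hd
  obtain ⟨m, hm⟩ := ht
  omega
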